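/- Let X and Z be infinite-dimensional Banach spaces such that Z ⊕ Z is isomorphic to Z and X is not isomorphic to any complemented subspace of Z. Then the closure of the set J_Z(X) of bounded operators on X that factor through Z is a proper (two-sided, closed) ideal in the Banach algebra L(X) of bounded operators on X. -/

import Mathlib

/-- If `X`, `Z` are infinite-dimensional Banach spaces with `Z ⊕ Z ≅ Z` and `X` not isomorphic
to any complemented subspace of `Z`, then the closure of the set of operators on `X` factoring
through `Z` is a proper two-sided closed ideal of `L(X)`. -/
theorem stmt12 {X Z : Type*} [NormedAddCommGroup X] [NormedSpace ℝ X] [CompleteSpace X]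
    [NormedAddCommGroup Z] [NormedSpace ℝ Z] [CompleteSpace Z]
    (hXinf : ¬ FiniteDimensional ℝ X) (hZinf : ¬ FiniteDimensional ℝ Z)
    (hZZ : Nonempty ((Z × Z) ≃L[ℝ] Z))
    (hXZ : ¬ ∃ P : Z →L[ℝ] Z, P.comp P = P ∧ Nonempty (X ≃L[ℝ] ↥(LinearMap.range (P : Z →ₗ[ℝ] Z)))) :
    (0 : X →L[ℝ] X) ∈
        closure {T : X →L[ℝ] X | ∃ (A : Z →L[ℝ] X) (B : X →L[ℝ] Z), T = A.comp B} ∧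
      (∀ S T : X →L[ℝ] X,
        S ∈ closure {T : X →L[ℝ] X | ∃ (A : Z →L[ℝ] X) (B : X →L[ℝ] Z), T = A.comp B} →
        T ∈ closure {T : X →L[ℝ] X | ∃ (A : Z →L[ℝ] X) (B : X →L[ℝ] Z), T = A.comp B} →
        S + T ∈ closure {T : X →L[ℝ] X | ∃ (A : Z →L[ℝ] X) (B : X →L[ℝ] Z), T = A.comp B}) ∧
      (∀ S T : X →L[ℝ] X,
        T ∈ closure {T : X →L[ℝ] X | ∃ (A : Z →L[ℝ] X) (B : X →L[ℝ] Z), T = A.comp B} →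
        S.comp T ∈ closure {T : X →L[ℝ] X | ∃ (A : Z →L[ℝ] X) (B : X →L[ℝ] Z), T = A.comp B} ∧
        T.comp S ∈ closure {T : X →L[ℝ] X | ∃ (A : Z →L[ℝ] X) (B : X →L[ℝ] Z), T = A.comp B}) ∧
      IsClosed (closure {T : X →L[ℝ] X | ∃ (A : Z →L[ℝ] X) (B : X →L[ℝ] Z), T = A.comp B}) ∧
      (ContinuousLinearMap.id ℝ X) ∉
        closure {T : X →L[ℝ] X | ∃ (A : Z →L[ℝ] X) (B : X →L[ℝ] Z), T = A.comp B} := by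
  set J : Set (X →L[ℝ] X) :=
    {T : X →L[ℝ] X | ∃ (A : Z →L[ℝ] X) (B : X →L[ℝ] Z), T = A.comp B} with hJ
  obtain ⟨e⟩ := hZZ
  refine ⟨?_, ?_, ?_, isClosed_closure, ?_⟩
  · exact subset_closure ⟨0, 0, by ext x; simp⟩
  · -- additivity
    intro S T hS hT
    have hadd : (fun p : (X →L[ℝ] X) × (X →L[ℝ] X) => p.1 + p.2) '' (J ×ˢ J) ⊆ J := by
      rintro _ ⟨⟨S, T⟩, ⟨⟨A₁, B₁, rfl⟩, ⟨A₂, B₂, rfl⟩⟩, rfl⟩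
      refine ⟨(A₁.comp (ContinuousLinearMap.fst ℝ Z Z) +
          A₂.comp (ContinuousLinearMap.snd ℝ Z Z)).comp (e.symm : Z →L[ℝ] Z × Z),
        (e : Z × Z →L[ℝ] Z).comp (B₁.prod B₂), ?_⟩
      ext x
      simp
    have hmem : (S, T) ∈ closure (J ×ˢ J) := by
      rw [closure_prod_eq]; exact ⟨hS, hT⟩
    have := image_closure_subset_closure_image
      (f := fun p : (X →L[ℝ] X) × (X →L[ℝ] X) => p.1 + p.2)
      (by fun_prop) (Set.mem_image_of_mem _ hmem)
    exact closure_mono hadd this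
  · -- two-sided multiplicativity
    intro S T hT
    constructor
    · have h1 : (fun T : X →L[ℝ] X => S.comp T) '' J ⊆ J := by
        rintro _ ⟨T, ⟨A, B, rfl⟩, rfl⟩
        exact ⟨S.comp A, B, by ext x; simp⟩
      have hc : Continuous (fun T : X →L[ℝ] X => S.comp T) := by
        have : (fun T : X →L[ℝ] X => S.comp T) = fun T => S * T := rfl
        rw [this]; exact continuous_mul_left S
      exact closure_mono h1 (image_closure_subset_closure_image hc
        (Set.mem_image_of_mem _ hT))
    · have h1 : (fun T : X →L[ℝ] X => T.comp S) '' J ⊆ J := by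
        rintro _ ⟨T, ⟨A, B, rfl⟩, rfl⟩
        exact ⟨A, B.comp S, by ext x; simp⟩
      have hc : Continuous (fun T : X →L[ℝ] X => T.comp S) := by
        have : (fun T : X →L[ℝ] X => T.comp S) = fun T => T * S := rfl
        rw [this]; exact continuous_mul_right S
      exact closure_mono h1 (image_closure_subset_closure_image hc
        (Set.mem_image_of_mem _ hT))
  · -- identity not in closure
    intro hid
    rw [Metric.mem_closure_iff] at hid
    obtain ⟨T, ⟨A, B, rfl⟩, hd⟩ := hid 1 one_pos
    have hnorm : ‖(1 : X →L[ℝ] X) - A.comp B‖ < 1 := by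
      rw [dist_eq_norm] at hd
      rwa [ContinuousLinearMap.one_def]
    let u : (X →L[ℝ] X)ˣ := Units.oneSub ((1 : X →L[ℝ] X) - A.comp B) hnorm
    have huval : (u : X →L[ℝ] X) = A.comp B := sub_sub_cancel 1 (A.comp B)
    set U : X →L[ℝ] X := ↑u⁻¹ with hU
    have h1 : ∀ x : X, U (A (B x)) = x := by
      intro x
      have := u.inv_mul
      rw [huval] at this
      calc U (A (B x)) = (U * A.comp B) x := rfl
        _ = x := by rw [this]; rfl
    have h2 : ∀ x : X, A (B (U x)) = x := by
      intro x
      have := u.mul_inv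
      rw [huval] at this
      calc A (B (U x)) = (A.comp B * U) x := rfl
        _ = x := by rw [this]; rfl
    set P : Z →L[ℝ] Z := (B.comp U).comp A with hP
    have hPapp : ∀ z, P z = B (U (A z)) := fun z => rfl
    have hPP : P.comp P = P := by
      ext z
      show B (U (A (B (U (A z))))) = B (U (A z))
      rw [h2]
    have hmem : ∀ x : X, B (U x) ∈ LinearMap.range (P : Z →ₗ[ℝ] Z) :=
      fun x => ⟨B (U x), by show B (U (A (B (U x)))) = B (U x); rw [h2]⟩
    let f : X →L[ℝ] ↥(LinearMap.range (P : Z →ₗ[ℝ] Z)) := (B.comp U).codRestrict _ hmem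
    let g : ↥(LinearMap.range (P : Z →ₗ[ℝ] Z)) →L[ℝ] X := A.comp (LinearMap.range (P : Z →ₗ[ℝ] Z)).subtypeL
    have hgf : Function.LeftInverse g f := by
      intro x
      show A (B (U x)) = x
      exact h2 x
    have hfg : Function.RightInverse g f := by
      rintro ⟨w, y, rfl⟩
      apply Subtype.ext
      show B (U (A (B (U (A y))))) = B (U (A y))
      rw [h2]
    exact hXZ ⟨P, hPP, ⟨ContinuousLinearEquiv.equivOfInverse f g hgf hfg⟩⟩
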